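/- If the all-A dessin D of a connected link projection has one vertex, then a_{M-l} = Σ_{H⊆D, g(H)≤l} (-1)^{e(H)} C(e(H)-2g(H), l-g(H)); in particular a_M = Σ_{H⊆D, g(H)=0} (-1)^{e(H)} and a_{M-1} = Σ_{g(H)=1}(-1)^{e(H)} + Σ_{g(H)=0}(-1)^{e(H)} e(H). -/

import Mathlib

open LaurentPolynomial

/-- The coefficient of `Aⁿ` in a Laurent polynomial in `A`. -/
def lcoeff (p : LaurentPolynomial ℤ) (n : ℤ) : ℤ := p.coeff n

lemma lcoeff_sum {ι : Type*} (s : Finset ι) (f : ι → LaurentPolynomial ℤ) (m : ℤ) :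
    lcoeff (∑ i ∈ s, f i) m = ∑ i ∈ s, lcoeff (f i) m := by
  simp only [lcoeff]
  rw [AddMonoidAlgebra.coeff_sum]
  exact Finset.sum_apply' m

lemma lcoeff_smul_T (c : ℤ) (b m : ℤ) : lcoeff (c • T b) m = if b = m then c else 0 := by
  show (c • (T b : LaurentPolynomial ℤ)).coeff m = _
  rw [AddMonoidAlgebra.coeff_smul_apply, T_apply]
  split <;> simp

lemma expand (a : ℤ) (n : ℕ) :
    (T a * (-T 2 - T (-2) : LaurentPolynomial ℤ) ^ n) =
    ∑ k ∈ Finset.range (n+1), ((-1)^n * (n.choose k : ℤ)) • T (a + 2*n - 4*k) := by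
  have Tmul : ∀ x y : ℤ, (T x : LaurentPolynomial ℤ) * T y = T (x+y) := fun x y => (T_add x y).symm
  have h1 : (-T 2 - T (-2) : LaurentPolynomial ℤ) = (-1 : LaurentPolynomial ℤ) * (T (-2) + T 2) := by ring
  rw [h1, mul_pow, add_pow, Finset.mul_sum, Finset.mul_sum]
  refine Finset.sum_congr rfl fun k hk => ?_
  have hkn : k ≤ n := Nat.lt_succ_iff.mp (Finset.mem_range.mp hk)
  have h2 : ((n-k:ℕ):ℤ) = (n:ℤ)-(k:ℤ) := by omega
  rw [zsmul_eq_mul, T_pow, T_pow]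
  have e1 : T a * ((-1 : LaurentPolynomial ℤ)^n * (T (↑k * -2) * T (↑(n-k) * 2) * (n.choose k : LaurentPolynomial ℤ))) =
      (-1 : LaurentPolynomial ℤ)^n * (n.choose k : LaurentPolynomial ℤ) * (T a * T (↑k * -2) * T (↑(n-k)*2)) := by ring
  rw [e1, Tmul, Tmul]
  have e2 : a + ↑k * -2 + ↑(n-k) * 2 = a + 2*n - 4*k := by rw [h2]; ring
  rw [e2]
  push_cast
  ring

lemma coeff_term (a m : ℤ) (n : ℕ) :
    lcoeff (T a * (-T 2 - T (-2) : LaurentPolynomial ℤ)^n) m =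
    ∑ k ∈ Finset.range (n+1), if a + 2*n - 4*k = m then (-1)^n * (n.choose k : ℤ) else 0 := by
  rw [expand, lcoeff_sum]
  exact Finset.sum_congr rfl fun k _ => lcoeff_smul_T _ _ _

/-- Suppose the all-`A` dessin `D` of a connected link projection has one
vertex.  Then in the Kauffman bracket expansion
`⟨P⟩ = Σ_{H⊆D} A^{e(D)-2e(H)} (-A²-A^{-2})^{f(H)-1}`, the coefficient `a_{M-l}` of
`A^{e(D)+2v(D)-2-4l} = A^{e(D)-4l}` satisfies
`a_{M-l} = Σ_{H⊆D, g(H)≤l} (-1)^{e(H)} C(e(H)-2g(H), l-g(H))`; in particular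
`a_M = Σ_{g(H)=0} (-1)^{e(H)}` and
`a_{M-1} = Σ_{g(H)=1} (-1)^{e(H)} + Σ_{g(H)=0} (-1)^{e(H)} e(H)`.

The one-vertex dessin is modeled by its edge set `E`, with face count `fc H` and genus
`g H` of each sub-dessin obeying the one-vertex Euler formula `2g(H) = e(H) - f(H) + 1`. -/
theorem one_vertex_coefficients
    (E : Type) [Fintype E] [DecidableEq E]
    (fc g : Finset E → ℕ)
    (hf : ∀ H : Finset E, 1 ≤ fc H)
    (hEuler : ∀ H : Finset E, (1 : ℤ) - H.card + fc H = 2 - 2 * g H)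
    (l : ℕ) :
    (lcoeff (∑ H : Finset E, T ((Fintype.card E : ℤ) - 2 * H.card) *
        (-T 2 - T (-2)) ^ (fc H - 1)) ((Fintype.card E : ℤ) - 4 * l) =
      ∑ H ∈ Finset.univ.filter fun H : Finset E => g H ≤ l,
        (-1 : ℤ) ^ H.card * (H.card - 2 * g H).choose (l - g H)) ∧
    (lcoeff (∑ H : Finset E, T ((Fintype.card E : ℤ) - 2 * H.card) *
        (-T 2 - T (-2)) ^ (fc H - 1)) (Fintype.card E : ℤ) =
      ∑ H ∈ Finset.univ.filter fun H : Finset E => g H = 0, (-1 : ℤ) ^ H.card) ∧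
    (lcoeff (∑ H : Finset E, T ((Fintype.card E : ℤ) - 2 * H.card) *
        (-T 2 - T (-2)) ^ (fc H - 1)) ((Fintype.card E : ℤ) - 4) =
      (∑ H ∈ Finset.univ.filter fun H : Finset E => g H = 1, (-1 : ℤ) ^ H.card) +
      ∑ H ∈ Finset.univ.filter fun H : Finset E => g H = 0,
        (-1 : ℤ) ^ H.card * H.card) := by
  have key : ∀ l : ℕ, lcoeff (∑ H : Finset E, T ((Fintype.card E : ℤ) - 2 * H.card) *
        (-T 2 - T (-2)) ^ (fc H - 1)) ((Fintype.card E : ℤ) - 4 * l) =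
      ∑ H ∈ Finset.univ.filter fun H : Finset E => g H ≤ l,
        (-1 : ℤ) ^ H.card * (H.card - 2 * g H).choose (l - g H) := by
    intro l
    rw [lcoeff_sum, Finset.sum_filter]
    refine Finset.sum_congr rfl fun H _ => ?_
    rw [coeff_term]
    have hE := hEuler H
    have hf' := hf H
    have hn : ((fc H - 1 : ℕ) : ℤ) = (H.card : ℤ) - 2 * g H := by omega
    have hge : 2 * g H ≤ H.card := by omega
    have hn' : fc H - 1 = H.card - 2 * g H := by omega
    by_cases hgl : g H ≤ l
    · rw [if_pos hgl]
      have hcond : ∀ k : ℕ,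
          (((Fintype.card E : ℤ) - 2 * H.card) + 2 * (fc H - 1 : ℕ) - 4 * k =
            (Fintype.card E : ℤ) - 4 * l) ↔ k = l - g H := by
        intro k
        omega
      have : ∀ k ∈ Finset.range (fc H - 1 + 1),
          (if ((Fintype.card E : ℤ) - 2 * H.card) + 2 * (fc H - 1 : ℕ) - 4 * k =
            (Fintype.card E : ℤ) - 4 * l then ((-1:ℤ))^(fc H - 1) * ((fc H - 1).choose k : ℤ) else 0) =
          (if k = l - g H then ((-1:ℤ))^(fc H - 1) * ((fc H - 1).choose k : ℤ) else 0) := by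
        intro k _
        exact if_congr (hcond k) rfl rfl
      rw [Finset.sum_congr rfl this, Finset.sum_ite_eq' (Finset.range (fc H - 1 + 1))]
      have hsign : ((-1:ℤ))^(fc H - 1) = (-1:ℤ)^H.card := by
        have h2 : (-1:ℤ)^(2 * g H) = 1 := by rw [pow_mul, neg_one_sq, one_pow]
        calc (-1:ℤ)^(fc H - 1) = (-1:ℤ)^(fc H - 1) * (-1:ℤ)^(2 * g H) := by rw [h2, mul_one]
          _ = (-1:ℤ)^(fc H - 1 + 2 * g H) := (pow_add _ _ _).symm
          _ = (-1:ℤ)^H.card := by congr 1; omega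
      by_cases hmem : l - g H ∈ Finset.range (fc H - 1 + 1)
      · rw [if_pos hmem, hsign, hn']
      · rw [if_neg hmem]
        have : H.card - 2 * g H < l - g H := by
          simp only [Finset.mem_range, Nat.lt_succ_iff, not_le] at hmem
          omega
        rw [Nat.choose_eq_zero_of_lt this]
        simp
    · rw [if_neg hgl]
      refine Finset.sum_eq_zero fun k _ => ?_
      rw [if_neg]
      omega
  refine ⟨key l, ?_, ?_⟩
  · have h0 := key 0
    simp only [Nat.cast_zero, mul_zero, sub_zero] at h0
    rw [h0]
    have hfil : (Finset.univ.filter fun H : Finset E => g H ≤ 0) =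
        Finset.univ.filter fun H : Finset E => g H = 0 := by
      simp [Nat.le_zero]
    rw [hfil]
    refine Finset.sum_congr rfl fun H hH => ?_
    have hg0 : g H = 0 := (Finset.mem_filter.mp hH).2
    simp [hg0]
  · have h1 := key 1
    rw [show ((Fintype.card E : ℤ) - 4) = (Fintype.card E : ℤ) - 4 * ((1:ℕ):ℤ) from by
      push_cast; ring, h1]
    have hfil : (Finset.univ.filter fun H : Finset E => g H ≤ 1) =
        (Finset.univ.filter fun H : Finset E => g H = 1) ∪
        (Finset.univ.filter fun H : Finset E => g H = 0) := by
      ext H; simp; omega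
    have hdisj : Disjoint (Finset.univ.filter fun H : Finset E => g H = 1)
        (Finset.univ.filter fun H : Finset E => g H = 0) := by
      rw [Finset.disjoint_left]
      intro x hx hy
      simp only [Finset.mem_filter] at hx hy
      omega
    rw [hfil, Finset.sum_union hdisj]
    congr 1
    · refine Finset.sum_congr rfl fun H hH => ?_
      have hg1 : g H = 1 := (Finset.mem_filter.mp hH).2
      simp [hg1]
    · refine Finset.sum_congr rfl fun H hH => ?_
      have hg0 : g H = 0 := (Finset.mem_filter.mp hH).2
      simp [hg0, Nat.choose_one_right]
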